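/- For nonnegative n×n matrices K₁,…,K_m and t ≥ 1, the entrywise inequality K₁^(t) ⋯ K_m^(t) ≤ (K₁ ⋯ K_m)^(t) holds, where A^(t) denotes the matrix with entries A(i,j)^t. -/

import Mathlib

open scoped ENNReal
open Finset
noncomputable def specRad {n : ℕ} (A : Matrix (Fin n) (Fin n) ℝ) : ℝ≥0∞ :=
  spectralRadius ℂ (A.map (algebraMap ℝ ℂ))
noncomputable def opNorm {n : ℕ} (A : Matrix (Fin n) (Fin n) ℝ) : ℝ :=
  ‖Matrix.toEuclideanCLM (𝕜 := ℝ) A‖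

lemma real_add_rpow_le {a b t : ℝ} (ha : 0 ≤ a) (hb : 0 ≤ b) (ht : 1 ≤ t) :
    a ^ t + b ^ t ≤ (a + b) ^ t := by
  have h := NNReal.add_rpow_le_rpow_add a.toNNReal b.toNNReal ht
  have h' := NNReal.coe_le_coe.2 h
  simpa [NNReal.coe_rpow, Real.coe_toNNReal a ha, Real.coe_toNNReal b hb,
    Real.coe_toNNReal _ (add_nonneg ha hb)] using h'

lemma sum_rpow_le_rpow_sum {ι : Type*} (s : Finset ι) (f : ι → ℝ)
    (hf : ∀ i ∈ s, 0 ≤ f i) {t : ℝ} (ht : 1 ≤ t) :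
    ∑ i ∈ s, f i ^ t ≤ (∑ i ∈ s, f i) ^ t := by
  classical
  induction s using Finset.cons_induction with
  | empty => simp [Real.zero_rpow (by linarith : t ≠ 0)]
  | cons a s ha ih =>
      have hfa : 0 ≤ f a := hf a (Finset.mem_cons_self a s)
      have hfs : ∀ i ∈ s, 0 ≤ f i := fun i hi => hf i (Finset.mem_cons_of_mem hi)
      rw [Finset.sum_cons, Finset.sum_cons]
      calc f a ^ t + ∑ i ∈ s, f i ^ t ≤ f a ^ t + (∑ i ∈ s, f i) ^ t := by
            gcongr; exact ih hfs
        _ ≤ (f a + ∑ i ∈ s, f i) ^ t :=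
            real_add_rpow_le hfa (Finset.sum_nonneg hfs) ht

lemma list_prod_nonneg {n : ℕ} (L : List (Matrix (Fin n) (Fin n) ℝ))
    (hL : ∀ A ∈ L, ∀ i j, 0 ≤ A i j) : ∀ i j, 0 ≤ L.prod i j := by
  induction L with
  | nil => intro i j; simp [Matrix.one_apply]; positivity
  | cons A L ih =>
      intro i j
      rw [List.prod_cons, Matrix.mul_apply]
      refine Finset.sum_nonneg fun k _ => mul_nonneg (hL A List.mem_cons_self i k)
        (ih (fun B hB => hL B (List.mem_cons_of_mem A hB)) k j)

lemma list_hadamard_pow_le {n : ℕ} (L : List (Matrix (Fin n) (Fin n) ℝ))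
    (hL : ∀ A ∈ L, ∀ i j, 0 ≤ A i j) {t : ℝ} (ht : 1 ≤ t) :
    ∀ i j, (L.map (fun A => Matrix.of fun i j => A i j ^ t)).prod i j ≤ (L.prod i j) ^ t := by
  induction L with
  | nil =>
      intro i j
      simp only [List.map_nil, List.prod_nil]
      rcases eq_or_ne i j with h | h
      · simp [Matrix.one_apply, h]
      · simp [Matrix.one_apply, h, Real.zero_rpow (by linarith : t ≠ 0)]
  | cons A L ih =>
      intro i j
      have hA : ∀ i j, 0 ≤ A i j := hL A List.mem_cons_self
      have hL' : ∀ B ∈ L, ∀ i j, 0 ≤ B i j := fun B hB => hL B (List.mem_cons_of_mem A hB)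
      have hQ : ∀ i j, 0 ≤ L.prod i j := list_prod_nonneg L hL'
      rw [List.map_cons, List.prod_cons, List.prod_cons, Matrix.mul_apply, Matrix.mul_apply]
      calc ∑ k, (Matrix.of fun i j => A i j ^ t) i k *
              (L.map (fun A => Matrix.of fun i j => A i j ^ t)).prod k j
          ≤ ∑ k, A i k ^ t * (L.prod k j) ^ t := by
            refine Finset.sum_le_sum fun k _ => ?_
            exact mul_le_mul_of_nonneg_left (ih hL' k j) (Real.rpow_nonneg (hA i k) t)
        _ = ∑ k, (A i k * L.prod k j) ^ t := by
            refine Finset.sum_congr rfl fun k _ => ?_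
            rw [Real.mul_rpow (hA i k) (hQ k j)]
        _ ≤ (∑ k, A i k * L.prod k j) ^ t :=
            sum_rpow_le_rpow_sum _ _ (fun k _ => mul_nonneg (hA i k) (hQ k j)) ht

theorem stmt3 {n m : ℕ} (K : Fin m → Matrix (Fin n) (Fin n) ℝ)
    (hK : ∀ t i j, 0 ≤ K t i j) (t : ℝ) (ht : 1 ≤ t) :
    ∀ i j,
      ((List.ofFn fun s => Matrix.of fun i j => (K s i j) ^ t).prod) i j ≤
        (((List.ofFn K).prod) i j) ^ t := by
  intro i j
  have h := list_hadamard_pow_le (List.ofFn K)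
    (by intro A hA i j; obtain ⟨s, rfl⟩ := List.mem_ofFn.mp hA; exact hK s i j) ht i j
  simpa [List.map_ofFn, Function.comp_def] using h
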